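/- Let T : C[0,1] → C[0,1] be a positive linear operator with T(e₀) = e₀ and T(e₁) ≤ e₁ (pointwise on [0,1]), and let g ∈ C[0,1] be twice continuously differentiable on [0,1]. Then for all m, p ∈ ℕ and all x ∈ [0,1] one has |T^{m+p}(g;x) − T^m(g;x)| ≤ (1/2)·‖g''‖·|T^{m+p}(e₂;x) − T^m(e₂;x)| + (‖g''‖ + ‖g'‖)·|T^m(e₁;x) − T^{m+p}(e₁;x)|, where ‖g'‖ and ‖g''‖ denote the sup norms of the first and second derivatives of g on [0,1]. -/

import Mathlib

open Filter

noncomputable section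

/-- The unit interval `[0,1]` as a subset of `ℝ`. -/
abbrev I01 : Set ℝ := Set.Icc 0 1

/-- The space `C[0,1]` of continuous real-valued functions on `[0,1]`. -/
abbrev CI := C(I01, ℝ)

/-- The monomial `e i : x ↦ x ^ i`. -/
def e (i : ℕ) : CI := ⟨fun x => (x : ℝ) ^ i, (continuous_subtype_val).pow i⟩

/-- A linear operator on `C[0,1]` is positive if it maps nonnegative functions to
nonnegative functions. -/
def IsPositive (T : CI →ₗ[ℝ] CI) : Prop :=
  ∀ f : CI, (∀ x, 0 ≤ f x) → ∀ x, 0 ≤ T f x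

/-- The `m`-th iterate of `T`. -/
def iter (T : CI →ₗ[ℝ] CI) : ℕ → (CI →ₗ[ℝ] CI)
  | 0 => LinearMap.id
  | m + 1 => T ∘ₗ iter T m

/-- The sup norm `sup {|h x| : x ∈ [0,1]}` of a function on `[0,1]`. -/
def supAbsOn (h : ℝ → ℝ) : ℝ := sSup ((fun x => |h x|) '' I01)

/- ## Auxiliary lemmas -/

lemma e_apply (i : ℕ) (x : I01) : e i x = (x : ℝ) ^ i := rfl

lemma iter_succ_apply (T : CI →ₗ[ℝ] CI) (m : ℕ) (f : CI) :
    iter T (m + 1) f = T (iter T m f) := rfl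

lemma iter_pos {T : CI →ₗ[ℝ] CI} (hpos : IsPositive T) : ∀ m, IsPositive (iter T m) := by
  intro m
  induction m with
  | zero => intro f hf x; simpa [iter] using hf x
  | succ n ih => intro f hf x; exact hpos _ (ih f hf) x

lemma iter_mono {T : CI →ₗ[ℝ] CI} (hpos : IsPositive T) (m : ℕ) {f h : CI}
    (hfh : ∀ y, f y ≤ h y) : ∀ y, iter T m f y ≤ iter T m h y := by
  intro y
  have := iter_pos hpos m (h - f) (fun z => by simpa [sub_nonneg] using hfh z) y
  simpa [map_sub, sub_nonneg] using this

lemma iter_e0 {T : CI →ₗ[ℝ] CI} (h0 : T (e 0) = e 0) : ∀ m, iter T m (e 0) = e 0 := by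
  intro m
  induction m with
  | zero => rfl
  | succ n ih => rw [iter_succ_apply, ih, h0]

lemma iter_add (T : CI →ₗ[ℝ] CI) (a b : ℕ) (f : CI) :
    iter T (a + b) f = iter T a (iter T b f) := by
  induction a with
  | zero => simp [iter]
  | succ n ih =>
      have h : n + 1 + b = (n + b) + 1 := by omega
      rw [h, iter_succ_apply, iter_succ_apply, ih]

lemma iter_e1_le {T : CI →ₗ[ℝ] CI} (hpos : IsPositive T)
    (h1 : ∀ x : I01, T (e 1) x ≤ e 1 x) :
    ∀ m, ∀ y : I01, iter T m (e 1) y ≤ e 1 y := by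
  intro m
  induction m with
  | zero => intro y; simp [iter]
  | succ n ih =>
      intro y
      have h2 : T (iter T n (e 1)) y ≤ T (e 1) y := by
        have := hpos (e 1 - iter T n (e 1)) (fun z => by simpa [sub_nonneg] using ih z) y
        simpa [map_sub, sub_nonneg] using this
      calc iter T (n + 1) (e 1) y = T (iter T n (e 1)) y := rfl
        _ ≤ T (e 1) y := h2
        _ ≤ e 1 y := h1 y

lemma supAbsOn_bound {h : ℝ → ℝ} (hcont : ContinuousOn h I01) :
    ∀ y ∈ I01, |h y| ≤ supAbsOn h := by
  intro y hy
  refine le_csSup ?_ ⟨y, hy, rfl⟩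
  exact (isCompact_Icc.image_of_continuousOn hcont.abs).bddAbove

/-- One-sided Taylor bound on `[0,1]` for a function with Lipschitz derivative. -/
lemma taylor_ub (g g' : ℝ → ℝ) (M : ℝ)
    (hd : ∀ x ∈ I01, HasDerivWithinAt g (g' x) I01 x)
    (hLip : ∀ u ∈ I01, ∀ v ∈ I01, |g' u - g' v| ≤ M * |u - v|)
    {y t : ℝ} (hy : y ∈ I01) (ht : t ∈ I01) :
    g t - g y - g' y * (t - y) ≤ M / 2 * (t - y) ^ 2 := by
  rcases eq_or_ne t y with h | hne
  · simp [h]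
  have hgc : ContinuousOn g I01 := fun z hz => (hd z hz).continuousWithinAt
  set φ : ℝ → ℝ := fun s =>
    g (y + s * (t - y)) - g y - s * (g' y * (t - y)) - M / 2 * s ^ 2 * (t - y) ^ 2 with hφ
  have hy0 : (0:ℝ) ≤ y := hy.1
  have hy1 : y ≤ 1 := hy.2
  have ht0 : (0:ℝ) ≤ t := ht.1
  have ht1 : t ≤ 1 := ht.2
  have hmap : ∀ s ∈ Set.Icc (0:ℝ) 1, y + s * (t - y) ∈ I01 := by
    intro s hs
    constructor
    · nlinarith [hs.1, hs.2, mul_nonneg hs.1 ht0, mul_nonneg (sub_nonneg.2 hs.2) hy0]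
    · nlinarith [hs.1, hs.2, mul_nonneg hs.1 (sub_nonneg.2 ht1),
        mul_nonneg (sub_nonneg.2 hs.2) (sub_nonneg.2 hy1)]
  have hint : ∀ s ∈ Set.Ioo (0:ℝ) 1, y + s * (t - y) ∈ Set.Ioo (0:ℝ) 1 := by
    intro s hs
    rcases lt_or_gt_of_ne hne with hlt | hgt
    · -- t < y
      constructor
      · nlinarith [hs.1, hs.2, mul_pos (sub_pos.2 hs.2) (lt_of_le_of_lt ht0 (lt_of_lt_of_le hlt (le_refl y)) : (0:ℝ) < y)]
      · nlinarith [hs.1, hs.2]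
    · -- y < t
      constructor
      · nlinarith [hs.1, hs.2]
      · nlinarith [hs.1, hs.2]
  have hderiv : ∀ s ∈ Set.Ioo (0:ℝ) 1,
      HasDerivAt φ
        (g' (y + s * (t - y)) * (t - y) - g' y * (t - y) - M / 2 * (2 * s) * (t - y) ^ 2) s := by
    intro s hs
    have hu : y + s * (t - y) ∈ Set.Ioo (0:ℝ) 1 := hint s hs
    have hg : HasDerivAt g (g' (y + s * (t - y))) (y + s * (t - y)) :=
      (hd _ (Set.mem_Icc_of_Ioo hu)).hasDerivAt (Icc_mem_nhds hu.1 hu.2)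
    have hin : HasDerivAt (fun s : ℝ => y + s * (t - y)) (t - y) s := by
      simpa using ((hasDerivAt_id s).mul_const (t - y)).const_add y
    have hcomp : HasDerivAt (fun s : ℝ => g (y + s * (t - y)))
        (g' (y + s * (t - y)) * (t - y)) s := hg.comp s hin
    have h3 : HasDerivAt (fun s : ℝ => s * (g' y * (t - y))) (g' y * (t - y)) s := by
      simpa using (hasDerivAt_id s).mul_const (g' y * (t - y))
    have h4 : HasDerivAt (fun s : ℝ => M / 2 * s ^ 2 * (t - y) ^ 2)
        (M / 2 * (2 * s) * (t - y) ^ 2) s := by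
      have := ((hasDerivAt_pow 2 s).const_mul (M / 2)).mul_const ((t - y) ^ 2)
      simpa [pow_one] using this
    exact ((hcomp.sub_const (g y)).sub h3).sub h4
  have hcont : ContinuousOn φ (Set.Icc 0 1) := by
    have c1 : ContinuousOn (fun s : ℝ => g (y + s * (t - y))) (Set.Icc 0 1) :=
      hgc.comp ((continuous_const.add (continuous_id.mul continuous_const)).continuousOn) hmap
    exact ((c1.sub continuousOn_const).sub
      ((continuous_id.mul continuous_const).continuousOn)).sub
      ((continuous_const.mul (continuous_pow 2)).mul continuous_const).continuousOn
  have hanti : AntitoneOn φ (Set.Icc 0 1) := by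
    apply antitoneOn_of_hasDerivWithinAt_nonpos (convex_Icc 0 1) hcont
    · intro s hs
      rw [interior_Icc] at hs ⊢
      exact (hderiv s hs).hasDerivWithinAt
    · intro s hs
      rw [interior_Icc] at hs
      have hu : y + s * (t - y) ∈ Set.Ioo (0:ℝ) 1 := hint s hs
      have hLs : |g' (y + s * (t - y)) - g' y| ≤ M * |(y + s * (t - y)) - y| :=
        hLip _ (Set.mem_Icc_of_Ioo hu) y hy
      have habs : |(y + s * (t - y)) - y| = s * |t - y| := by
        rw [show (y + s * (t - y)) - y = s * (t - y) by ring, abs_mul, abs_of_pos hs.1]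
      rw [habs] at hLs
      have h5 : (g' (y + s * (t - y)) - g' y) * (t - y) ≤ M * s * (t - y) ^ 2 := by
        calc (g' (y + s * (t - y)) - g' y) * (t - y)
            ≤ |(g' (y + s * (t - y)) - g' y) * (t - y)| := le_abs_self _
          _ = |g' (y + s * (t - y)) - g' y| * |t - y| := abs_mul _ _
          _ ≤ (M * (s * |t - y|)) * |t - y| := by
              apply mul_le_mul_of_nonneg_right hLs (abs_nonneg _)
          _ = M * s * (t - y) ^ 2 := by rw [mul_assoc, mul_assoc, abs_mul_abs_self]; ring
            
      nlinarith [h5]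
  have h01 : (0:ℝ) ∈ Set.Icc (0:ℝ) 1 := by constructor <;> norm_num
  have h11 : (1:ℝ) ∈ Set.Icc (0:ℝ) 1 := by constructor <;> norm_num
  have := hanti h01 h11 zero_le_one
  have hφ0 : φ 0 = 0 := by simp [hφ]
  have hφ1 : φ 1 = g t - g y - g' y * (t - y) - M / 2 * (t - y) ^ 2 := by
    simp [hφ]
  rw [hφ0, hφ1] at this
  linarith

theorem stmt14 (T : CI →ₗ[ℝ] CI) (hpos : IsPositive T)
    (h0 : T (e 0) = e 0) (h1 : ∀ x : I01, T (e 1) x ≤ e 1 x)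
    (g g' g'' : ℝ → ℝ) (G : CI) (hGg : ∀ x : I01, G x = g x)
    (hd1 : ∀ x ∈ I01, HasDerivWithinAt g (g' x) I01 x)
    (hd2 : ∀ x ∈ I01, HasDerivWithinAt g' (g'' x) I01 x)
    (hc : ContinuousOn g'' I01) :
    ∀ m p : ℕ, ∀ x : I01,
      |iter T (m + p) G x - iter T m G x| ≤
        (1 / 2) * supAbsOn g'' * |iter T (m + p) (e 2) x - iter T m (e 2) x|
        + (supAbsOn g'' + supAbsOn g') * |iter T m (e 1) x - iter T (m + p) (e 1) x| := by
  intro m p x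
  set M1 := supAbsOn g' with hM1
  set M2 := supAbsOn g'' with hM2
  have hg'c : ContinuousOn g' I01 := fun z hz => (hd2 z hz).continuousWithinAt
  have hM1b : ∀ y ∈ I01, |g' y| ≤ M1 := supAbsOn_bound hg'c
  have hM2b : ∀ y ∈ I01, |g'' y| ≤ M2 := supAbsOn_bound hc
  have h0I : (0:ℝ) ∈ I01 := ⟨le_refl 0, zero_le_one⟩
  have hM1nn : 0 ≤ M1 := le_trans (abs_nonneg _) (hM1b 0 h0I)
  have hM2nn : 0 ≤ M2 := le_trans (abs_nonneg _) (hM2b 0 h0I)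
  have hLip : ∀ u ∈ I01, ∀ v ∈ I01, |g' u - g' v| ≤ M2 * |u - v| := by
    intro u hu v hv
    have := Convex.norm_image_sub_le_of_norm_hasDerivWithin_le hd2
      (fun z hz => by simpa [Real.norm_eq_abs] using hM2b z hz) (convex_Icc 0 1) hv hu
    simpa [Real.norm_eq_abs] using this
  have hT : ∀ y ∈ I01, ∀ t ∈ I01,
      |g t - g y - g' y * (t - y)| ≤ M2 / 2 * (t - y) ^ 2 := by
    intro y hy t ht
    rw [abs_le]
    constructor
    · have hLip' : ∀ u ∈ I01, ∀ v ∈ I01, |(-g' u) - (-g' v)| ≤ M2 * |u - v| := by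
        intro u hu v hv
        have : (-g' u) - (-g' v) = -(g' u - g' v) := by ring
        rw [this, abs_neg]
        exact hLip u hu v hv
      have := taylor_ub (fun z => -g z) (fun z => -g' z) M2
        (fun z hz => (hd1 z hz).neg) hLip' hy ht
      linarith
    · exact taylor_ub g g' M2 hd1 hLip hy ht
  -- Step 1: pointwise bound on w = T^p G - G
  set w : CI := iter T p G - G with hw
  set R : CI := (M2 / 2) • (iter T p (e 2) - e 2) + (M2 + M1) • (e 1 - iter T p (e 1)) with hR
  have key : ∀ y : I01, |w y| ≤ R y := by
    intro y
    have hyI : (y:ℝ) ∈ I01 := y.2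
    have hy0 : (0:ℝ) ≤ (y:ℝ) := hyI.1
    have hy1 : (y:ℝ) ≤ 1 := hyI.2
    set Y : ℝ := (y:ℝ)
    set S1 : ℝ := iter T p (e 1) y with hS1
    set S2 : ℝ := iter T p (e 2) y with hS2
    have hS1le : S1 ≤ Y := by
      have := iter_e1_le hpos h1 p y
      simpa [e_apply, pow_one] using this
    have hgy := abs_le.1 (hM1b Y hyI)
    -- upper bound
    have hub : iter T p G y ≤
        (g Y - g' Y * Y + M2 / 2 * Y ^ 2) + (g' Y - M2 * Y) * S1 + M2 / 2 * S2 := by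
      have hP : ∀ z : I01, G z ≤
          ((g Y - g' Y * Y + M2 / 2 * Y ^ 2) • e 0 + (g' Y - M2 * Y) • e 1
            + (M2 / 2) • e 2) z := by
        intro z
        have h := (abs_le.1 (hT Y hyI (z:ℝ) z.2)).2
        have hGz : G z = g (z:ℝ) := hGg z
        simp only [ContinuousMap.add_apply, ContinuousMap.smul_apply, e_apply, smul_eq_mul]
        rw [hGz]
        nlinarith [h]
      have := iter_mono hpos p hP y
      calc iter T p G y ≤ _ := this
        _ = (g Y - g' Y * Y + M2 / 2 * Y ^ 2) + (g' Y - M2 * Y) * S1 + M2 / 2 * S2 := by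
            simp [map_add, map_smul, iter_e0 h0 p, e_apply, hS1, hS2]
    -- lower bound
    have hlb : (g Y - g' Y * Y - M2 / 2 * Y ^ 2) + (g' Y + M2 * Y) * S1 - M2 / 2 * S2 ≤
        iter T p G y := by
      have hQ : ∀ z : I01,
          ((g Y - g' Y * Y - M2 / 2 * Y ^ 2) • e 0 + (g' Y + M2 * Y) • e 1
            - (M2 / 2) • e 2) z ≤ G z := by
        intro z
        have h := (abs_le.1 (hT Y hyI (z:ℝ) z.2)).1
        have hGz : G z = g (z:ℝ) := hGg z
        simp only [ContinuousMap.add_apply, ContinuousMap.sub_apply,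
          ContinuousMap.smul_apply, e_apply, smul_eq_mul]
        rw [hGz]
        nlinarith [h]
      have := iter_mono hpos p hQ y
      calc (g Y - g' Y * Y - M2 / 2 * Y ^ 2) + (g' Y + M2 * Y) * S1 - M2 / 2 * S2
          = iter T p ((g Y - g' Y * Y - M2 / 2 * Y ^ 2) • e 0 + (g' Y + M2 * Y) • e 1
            - (M2 / 2) • e 2) y := by
            simp [map_add, map_sub, map_smul, iter_e0 h0 p, e_apply, hS1, hS2]
        _ ≤ iter T p G y := this
    have hwy : w y = iter T p G y - g Y := by
      simp [hw, hGg y, Y]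
    have hRy : R y = M2 / 2 * (S2 - Y ^ 2) + (M2 + M1) * (Y - S1) := by
      simp [hR, e_apply, hS1, hS2]
      try ring
    rw [abs_le, hwy, hRy]
    constructor
    · nlinarith [hlb, mul_nonneg (sub_nonneg.2 hS1le)
        (by nlinarith [mul_nonneg hM2nn (sub_nonneg.2 hy1)] : (0:ℝ) ≤ M1 + M2 - M2 * Y - g' Y)]
    · nlinarith [hub, mul_nonneg (sub_nonneg.2 hS1le)
        (by nlinarith [mul_nonneg hM2nn (sub_nonneg.2 hy1)] : (0:ℝ) ≤ M1 + M2 - M2 * Y + g' Y)]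
  -- Step 2: apply T^m
  have hub2 : iter T m w x ≤ iter T m R x :=
    iter_mono hpos m (fun z => (abs_le.1 (key z)).2) x
  have hlb2 : -(iter T m R x) ≤ iter T m w x := by
    have := iter_mono hpos m (f := -R) (h := w)
      (fun z => by simpa using (abs_le.1 (key z)).1) x
    simpa [map_neg] using this
  have habs2 : |iter T m w x| ≤ iter T m R x := abs_le.2 ⟨hlb2, hub2⟩
  have hwx : iter T m w x = iter T (m + p) G x - iter T m G x := by
    simp [hw, map_sub, iter_add T m p G]
  have hRx : iter T m R x = M2 / 2 * (iter T (m + p) (e 2) x - iter T m (e 2) x)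
      + (M2 + M1) * (iter T m (e 1) x - iter T (m + p) (e 1) x) := by
    simp [hR, map_add, map_sub, map_smul, iter_add T m p]
    try ring
  rw [hwx, hRx] at habs2
  have h6 : M2 / 2 * (iter T (m + p) (e 2) x - iter T m (e 2) x)
      ≤ M2 / 2 * |iter T (m + p) (e 2) x - iter T m (e 2) x| :=
    mul_le_mul_of_nonneg_left (le_abs_self _) (by linarith)
  have h7 : (M2 + M1) * (iter T m (e 1) x - iter T (m + p) (e 1) x)
      ≤ (M2 + M1) * |iter T m (e 1) x - iter T (m + p) (e 1) x| :=
    mul_le_mul_of_nonneg_left (le_abs_self _) (by linarith)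
  calc |iter T (m + p) G x - iter T m G x|
      ≤ M2 / 2 * (iter T (m + p) (e 2) x - iter T m (e 2) x)
        + (M2 + M1) * (iter T m (e 1) x - iter T (m + p) (e 1) x) := habs2
    _ ≤ M2 / 2 * |iter T (m + p) (e 2) x - iter T m (e 2) x|
        + (M2 + M1) * |iter T m (e 1) x - iter T (m + p) (e 1) x| := by linarith
    _ = (1 / 2) * M2 * |iter T (m + p) (e 2) x - iter T m (e 2) x|
        + (M2 + M1) * |iter T m (e 1) x - iter T (m + p) (e 1) x| := by ring
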